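/- Let a, b, ℓ be integers with b > |a| and ℓ ≥ 1. Then the number of distinct values W_C(a,b), as C ranges over binary linear codes of length ℓ, is at most (ℓ+1) · (2b / gcd(b−a, b+a))^ℓ. -/

import Mathlib

open scoped Classical

/-- Hamming weight of a binary vector. -/
def wt {m : ℕ} (c : Fin m → ZMod 2) : ℕ :=
  (Finset.univ.filter (fun i => c i ≠ 0)).card

/-- The weight enumerator of a binary linear code evaluated at integers `(x, y)`:
`W_C(x,y) = Σ_{c ∈ C} x^{w(c)} y^{ℓ - w(c)}`. -/
noncomputable def WE {m : ℕ} (C : Submodule (ZMod 2) (Fin m → ZMod 2)) (x y : ℤ) : ℤ :=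
  ∑ c : C, x ^ wt (c : Fin m → ZMod 2) * y ^ (m - wt (c : Fin m → ZMod 2))

namespace MWaux

noncomputable def dotB (m : ℕ) : LinearMap.BilinForm (ZMod 2) (Fin m → ZMod 2) :=
  LinearMap.mk₂ (ZMod 2) (fun x y => ∑ i, x i * y i)
    (by intro x x' y; simp [add_mul, Finset.sum_add_distrib])
    (by intro r x y; simp [Finset.mul_sum, mul_assoc])
    (by intro x y y'; simp [mul_add, Finset.sum_add_distrib])
    (by intro r x y; simp [Finset.mul_sum, mul_left_comm])

lemma dotB_apply {m : ℕ} (x y : Fin m → ZMod 2) : dotB m x y = ∑ i, x i * y i := rfl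

lemma dotB_refl {m : ℕ} : (dotB m).IsRefl := by
  intro x y h
  simpa [dotB_apply, mul_comm] using h

lemma dotB_nondeg {m : ℕ} : (dotB m).Nondegenerate := by
  constructor <;> intro x hx <;> funext j <;> have := hx (Pi.single j 1) <;>
  simpa [dotB_apply, Pi.single_apply, Finset.sum_ite_eq'] using this

noncomputable def ε (t : ZMod 2) : ℤ := if t = 0 then 1 else -1

lemma ε_zero : ε 0 = 1 := rfl

lemma ε_add (s t : ZMod 2) : ε (s + t) = ε s * ε t := by
  revert s t; decide

lemma ε_sum {ι : Type*} (s : Finset ι) (f : ι → ZMod 2) :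
    ε (∑ i ∈ s, f i) = ∏ i ∈ s, ε (f i) := by
  classical
  induction s using Finset.induction_on with
  | empty => simp [ε_zero]
  | insert a s hx ih => simp [Finset.sum_insert hx, Finset.prod_insert hx, ε_add, ih]

lemma wt_le {m : ℕ} (c : Fin m → ZMod 2) : wt c ≤ m := by
  simpa [wt] using (Finset.card_filter_le Finset.univ fun i => c i ≠ 0)

lemma pow_mul_pow_eq_prod {m : ℕ} (c : Fin m → ZMod 2) (x y : ℤ) :
    x ^ wt c * y ^ (m - wt c) = ∏ i, (if c i ≠ 0 then x else y) := by
  classical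
  rw [Finset.prod_ite, Finset.prod_const, Finset.prod_const]
  have h := Finset.card_filter_add_card_filter_not
    (s := (Finset.univ : Finset (Fin m))) (p := fun i => c i ≠ 0)
  simp only [Finset.card_univ, Fintype.card_fin] at h
  have h2 : (Finset.filter (fun i => ¬ c i ≠ 0) Finset.univ).card = m - wt c := by
    unfold wt; omega
  rw [h2]
  rfl

/-- Character sum over a code. -/
lemma char_sum {m : ℕ} (D : Submodule (ZMod 2) (Fin m → ZMod 2)) (v : Fin m → ZMod 2) :
    (∑ c : D, ε (dotB m (c : Fin m → ZMod 2) v)) =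
      if v ∈ (dotB m).orthogonal D then (Fintype.card D : ℤ) else 0 := by
  classical
  by_cases hv : v ∈ (dotB m).orthogonal D
  · rw [if_pos hv]
    have : ∀ c : D, ε (dotB m (c : Fin m → ZMod 2) v) = 1 := by
      intro c
      have := hv (c : Fin m → ZMod 2) c.2
      simp [ε, this]
    simp [this]
  · rw [if_neg hv]
    -- there exists c0 ∈ D with dotB c0 v = 1
    have : ∃ c0 : D, dotB m (c0 : Fin m → ZMod 2) v ≠ 0 := by
      by_contra h
      push_neg at h
      exact hv fun n hn => h ⟨n, hn⟩
    obtain ⟨c0, hc0⟩ := this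
    have hone : ∀ x : ZMod 2, x ≠ 0 → x = 1 := by decide
    have hc0' : dotB m (c0 : Fin m → ZMod 2) v = 1 := hone _ hc0
    have key : (∑ c : D, ε (dotB m (c : Fin m → ZMod 2) v))
        = - ∑ c : D, ε (dotB m (c : Fin m → ZMod 2) v) := by
      nth_rewrite 1 [← Equiv.sum_comp (Equiv.addRight c0)
        (fun c : D => ε (dotB m (c : Fin m → ZMod 2) v))]
      rw [← Finset.sum_neg_distrib]
      apply Finset.sum_congr rfl
      intro c _
      have hco : ((Equiv.addRight c0 c : D) : Fin m → ZMod 2)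
          = (c : Fin m → ZMod 2) + (c0 : Fin m → ZMod 2) := rfl
      simp only [hco, map_add, LinearMap.add_apply, ε_add, hc0']
      simp [ε]
    linarith



/-- Coordinatewise expansion. -/
lemma expand {m : ℕ} (a b : ℤ) (c : Fin m → ZMod 2) :
    (∑ v : Fin m → ZMod 2, ε (dotB m c v) * (a ^ wt v * b ^ (m - wt v)))
      = (b - a) ^ wt c * (b + a) ^ (m - wt c) := by
  classical
  have step : ∀ v : Fin m → ZMod 2,
      ε (dotB m c v) * (a ^ wt v * b ^ (m - wt v))
        = ∏ i, (ε (c i * v i) * (if v i ≠ 0 then a else b)) := by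
    intro v
    rw [pow_mul_pow_eq_prod, dotB_apply, ε_sum, ← Finset.prod_mul_distrib]
  simp only [step]
  rw [← Fintype.prod_sum (fun i (t : ZMod 2) => ε (c i * t) * (if t ≠ 0 then a else b))]
  have coord : ∀ i, (∑ t : ZMod 2, ε (c i * t) * (if t ≠ 0 then a else b))
      = (if c i ≠ 0 then b - a else b + a) := by
    intro i
    have hsum : ∀ f : ZMod 2 → ℤ, (∑ t : ZMod 2, f t) = f 0 + f 1 := fun f =>
      Fin.sum_univ_two f
    rw [hsum]
    by_cases h : c i = 0 <;> simp [h, ε] <;> ring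
  rw [Finset.prod_congr rfl (fun i _ => coord i), ← pow_mul_pow_eq_prod]

/-- MacWilliams-type identity. -/
lemma macwilliams {m : ℕ} (a b : ℤ) (D : Submodule (ZMod 2) (Fin m → ZMod 2)) :
    (Fintype.card D : ℤ) * WE ((dotB m).orthogonal D) a b = WE D (b - a) (b + a) := by
  classical
  unfold WE
  have : ∀ c : D, (b - a) ^ wt (c : Fin m → ZMod 2) * (b + a) ^ (m - wt (c : Fin m → ZMod 2))
      = ∑ v : Fin m → ZMod 2, ε (dotB m (c : Fin m → ZMod 2) v) * (a ^ wt v * b ^ (m - wt v)) :=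
    fun c => (expand a b _).symm
  rw [Finset.sum_congr rfl (fun c _ => this c), Finset.sum_comm]
  have : ∀ v : Fin m → ZMod 2,
      (∑ c : D, ε (dotB m (c : Fin m → ZMod 2) v) * (a ^ wt v * b ^ (m - wt v)))
      = (if v ∈ (dotB m).orthogonal D then (Fintype.card D : ℤ) else 0)
          * (a ^ wt v * b ^ (m - wt v)) := by
    intro v
    rw [← Finset.sum_mul, char_sum]
  rw [Finset.sum_congr rfl (fun v _ => this v)]
  rw [Finset.mul_sum]
  rw [← Finset.sum_filter_add_sum_filter_not Finset.univ (fun v => v ∈ (dotB m).orthogonal D)]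
  have h2 : (∑ v ∈ Finset.univ.filter (fun v => v ∉ (dotB m).orthogonal D),
      (if v ∈ (dotB m).orthogonal D then (Fintype.card D : ℤ) else 0)
        * (a ^ wt v * b ^ (m - wt v))) = 0 := by
    apply Finset.sum_eq_zero
    intro v hv
    simp only [Finset.mem_filter] at hv
    rw [if_neg hv.2, zero_mul]
  rw [h2, add_zero]
  have h3 : (∑ v ∈ Finset.univ.filter (fun v => v ∈ (dotB m).orthogonal D),
      (if v ∈ (dotB m).orthogonal D then (Fintype.card D : ℤ) else 0)
        * (a ^ wt v * b ^ (m - wt v)))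
      = ∑ v ∈ Finset.univ.filter (fun v => v ∈ (dotB m).orthogonal D),
        (Fintype.card D : ℤ) * (a ^ wt v * b ^ (m - wt v)) := by
    apply Finset.sum_congr rfl
    intro v hv
    simp only [Finset.mem_filter] at hv
    rw [if_pos hv.2]
  rw [h3, ← Finset.sum_subtype (Finset.univ.filter (fun v => v ∈ (dotB m).orthogonal D))
    (by intro v; simp) (fun v => (Fintype.card D : ℤ) * (a ^ wt v * b ^ (m - wt v)))]

end MWaux

/-- For integers `a, b` with `b > |a|` and `ℓ ≥ 1`, the number of distinct values
`W_C(a,b)` over binary linear codes `C` of length `ℓ` is at most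
`(ℓ+1) · (2b / gcd(b-a, b+a))^ℓ`. -/
theorem count_weight_enum_values_dual (a b : ℤ) (hb : |a| < b) (ℓ : ℕ) (hl : 1 ≤ ℓ) :
    {v : ℤ | ∃ C : Submodule (ZMod 2) (Fin ℓ → ZMod 2), v = WE C a b}.ncard
      ≤ (ℓ + 1) * ((2 * b).toNat / Int.gcd (b - a) (b + a)) ^ ℓ := by
  classical
  obtain ⟨hb1, hb2⟩ := abs_lt.mp hb
  have hab : 0 < b - a := by omega
  have hba : 0 < b + a := by omega
  set g : ℕ := Int.gcd (b - a) (b + a) with hgdef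
  have hg : 0 < g := Int.gcd_pos_of_ne_zero_left _ (by omega)
  obtain ⟨u, hu⟩ : ((g : ℤ)) ∣ (b - a) := Int.gcd_dvd_left _ _
  obtain ⟨w, hw⟩ : ((g : ℤ)) ∣ (b + a) := Int.gcd_dvd_right _ _
  have hgz : (0:ℤ) < (g:ℤ) := by exact_mod_cast hg
  have hu1 : 1 ≤ u := by nlinarith
  have hw1 : 1 ≤ w := by nlinarith
  set q : ℕ := (2 * b).toNat / g with hqdef
  have h2b : 2 * b = (g : ℤ) * (u + w) := by rw [mul_add, ← hu, ← hw]; ring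
  have htn : (2 * b).toNat = g * (u + w).toNat := by
    have h1 : ((g * (u + w).toNat : ℕ) : ℤ) = 2 * b := by
      push_cast
      rw [Int.toNat_of_nonneg (by omega)]
      omega
    omega
  have hq2 : q = (u + w).toNat := by
    rw [hqdef, htn, Nat.mul_div_cancel_left _ hg]
  have hqZ : (q : ℤ) = u + w := by rw [hq2, Int.toNat_of_nonneg (by omega)]
  set M : ℕ := q ^ ℓ with hMdef
  set hfun : ℕ × ℤ → ℤ := fun p => ((g : ℤ) ^ ℓ * p.2) / 2 ^ p.1 with hfdef
  set T : Finset (ℕ × ℤ) := Finset.range (ℓ + 1) ×ˢ Finset.Icc (1 : ℤ) (M : ℤ) with hTdef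
  have hsub : {v : ℤ | ∃ C : Submodule (ZMod 2) (Fin ℓ → ZMod 2), v = WE C a b}
      ⊆ ↑(T.image hfun) := by
    rintro v ⟨C, rfl⟩
    set O : Submodule (ZMod 2) (Fin ℓ → ZMod 2) := (MWaux.dotB ℓ).orthogonal C with hOdef
    set e : ℕ := Module.finrank (ZMod 2) O with hedef
    have hfr : Module.finrank (ZMod 2) (Fin ℓ → ZMod 2) = ℓ := Module.finrank_fin_fun _
    have hCle : Module.finrank (ZMod 2) C ≤ ℓ := by
      have := Submodule.finrank_le C; rwa [hfr] at this
    have hdim : e = ℓ - Module.finrank (ZMod 2) C := by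
      rw [hedef, hOdef, LinearMap.BilinForm.finrank_orthogonal MWaux.dotB_nondeg
        C, hfr]
    have hOO : (MWaux.dotB ℓ).orthogonal O = C :=
      LinearMap.BilinForm.orthogonal_orthogonal MWaux.dotB_nondeg MWaux.dotB_refl C
    have hcardO : Fintype.card O = 2 ^ e := by
      rw [hedef, Module.card_eq_pow_finrank (K := ZMod 2), ZMod.card]
    have hcardC : Fintype.card C = 2 ^ Module.finrank (ZMod 2) C := by
      rw [Module.card_eq_pow_finrank (K := ZMod 2), ZMod.card]
    have hmw := MWaux.macwilliams a b O
    rw [hOO, hcardO] at hmw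
    push_cast at hmw
    set S : ℤ := ∑ c : O, u ^ wt (c : Fin ℓ → ZMod 2) * w ^ (ℓ - wt (c : Fin ℓ → ZMod 2))
      with hSdef
    have hWE : WE O (b - a) (b + a) = (g : ℤ) ^ ℓ * S := by
      rw [hSdef, Finset.mul_sum]
      unfold WE
      apply Finset.sum_congr rfl
      intro c _
      rw [hu, hw, mul_pow, mul_pow]
      have hle := MWaux.wt_le (c : Fin ℓ → ZMod 2)
      have : (g : ℤ) ^ wt (c : Fin ℓ → ZMod 2) * (g : ℤ) ^ (ℓ - wt (c : Fin ℓ → ZMod 2))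
          = (g : ℤ) ^ ℓ := by
        rw [← pow_add]
        congr 1
        omega
      calc (g : ℤ) ^ wt (c : Fin ℓ → ZMod 2) * u ^ wt (c : Fin ℓ → ZMod 2) *
            ((g : ℤ) ^ (ℓ - wt (c : Fin ℓ → ZMod 2)) * w ^ (ℓ - wt (c : Fin ℓ → ZMod 2)))
          = ((g : ℤ) ^ wt (c : Fin ℓ → ZMod 2) * (g : ℤ) ^ (ℓ - wt (c : Fin ℓ → ZMod 2))) *
            (u ^ wt (c : Fin ℓ → ZMod 2) * w ^ (ℓ - wt (c : Fin ℓ → ZMod 2))) := by ring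
        _ = _ := by rw [this]
    have hSpos : 0 < S := by
      rw [hSdef]
      apply Finset.sum_pos
      · intro c _
        exact mul_pos (pow_pos (by omega) _) (pow_pos (by omega) _)
      · exact ⟨⟨0, O.zero_mem⟩, Finset.mem_univ _⟩
    -- upper bound on WE C a b
    have hWEle : WE C a b ≤ (2 : ℤ) ^ Module.finrank (ZMod 2) C * b ^ ℓ := by
      have hcast : ((Fintype.card C : ℤ)) = (2 : ℤ) ^ Module.finrank (ZMod 2) C := by
        rw [hcardC]; push_cast; ring
      rw [← hcast]
      unfold WE
      calc (∑ c : C, a ^ wt (c : Fin ℓ → ZMod 2) * b ^ (ℓ - wt (c : Fin ℓ → ZMod 2)))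
          ≤ ∑ _c : C, b ^ ℓ := by
            apply Finset.sum_le_sum
            intro c _
            have hle := MWaux.wt_le (c : Fin ℓ → ZMod 2)
            set k := wt (c : Fin ℓ → ZMod 2)
            calc a ^ k * b ^ (ℓ - k) ≤ |a ^ k * b ^ (ℓ - k)| := le_abs_self _
              _ = |a| ^ k * b ^ (ℓ - k) := by
                  rw [abs_mul, abs_pow, abs_pow, abs_of_nonneg (by omega : (0:ℤ) ≤ b)]
              _ ≤ b ^ k * b ^ (ℓ - k) := by
                  apply mul_le_mul_of_nonneg_right _ (pow_nonneg (by omega) _)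
                  exact pow_le_pow_left₀ (abs_nonneg a) (le_of_lt hb) k
              _ = b ^ ℓ := by rw [← pow_add]; congr 1; omega
        _ = (Fintype.card C : ℤ) * b ^ ℓ := by
            rw [Finset.sum_const, Finset.card_univ, nsmul_eq_mul]
    have hSle : S ≤ (M : ℤ) := by
      have key : (g : ℤ) ^ ℓ * S ≤ (g : ℤ) ^ ℓ * (M : ℤ) := by
        have h1 : (g : ℤ) ^ ℓ * S = 2 ^ e * WE C a b := by rw [← hWE, ← hmw]
        have h2 : (2 : ℤ) ^ e * WE C a b ≤ 2 ^ e * (2 ^ Module.finrank (ZMod 2) C * b ^ ℓ) :=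
          mul_le_mul_of_nonneg_left hWEle (by positivity)
        have h3 : (2 : ℤ) ^ e * (2 ^ Module.finrank (ZMod 2) C * b ^ ℓ) = (2 * b) ^ ℓ := by
          rw [← mul_assoc, ← pow_add, mul_pow]
          congr 2
          omega
        have h4 : ((2 : ℤ) * b) ^ ℓ = (g : ℤ) ^ ℓ * (M : ℤ) := by
          rw [hMdef]
          push_cast
          rw [← mul_pow]
          congr 1
          rw [hqZ, ← h2b]
        rw [h1, ← h4]
        exact h2.trans_eq h3
      exact le_of_mul_le_mul_left key (pow_pos hgz ℓ)
    have hval : hfun (e, S) = WE C a b := by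
      rw [hfdef]
      simp only
      rw [← hWE, ← hmw, Int.mul_ediv_cancel_left _ (by positivity)]
    refine Finset.mem_coe.mpr (Finset.mem_image.mpr ⟨(e, S), ?_, hval⟩)
    rw [hTdef, Finset.mem_product]
    constructor
    · rw [Finset.mem_range]; omega
    · rw [Finset.mem_Icc]; exact ⟨hSpos, hSle⟩
  calc {v : ℤ | ∃ C : Submodule (ZMod 2) (Fin ℓ → ZMod 2), v = WE C a b}.ncard
      ≤ (↑(T.image hfun) : Set ℤ).ncard := Set.ncard_le_ncard hsub (T.image hfun).finite_toSet
    _ = (T.image hfun).card := Set.ncard_coe_finset _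
    _ ≤ T.card := Finset.card_image_le
    _ = (ℓ + 1) * M := by
        rw [hTdef, Finset.card_product, Finset.card_range, Int.card_Icc]
        congr 1
        simp
    _ = (ℓ + 1) * ((2 * b).toNat / Int.gcd (b - a) (b + a)) ^ ℓ := rfl
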